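/- Let A be an n-dimensional affine subspace of a Hilbert space E, z ∈ A, and let h : (direction space of A) → R≥0 be defined by h(v) = dist(z+v, A')² for another n-dimensional affine subspace A'. Then h is a polynomial of degree 2 of the form h(v) = Q(v) + L(v) + h(0), where L is linear and Q is the nonnegative quadratic form Q(v) = sin²∠(v, A'⃗)·|v|². Consequently, if h(v) ≤ 4δ² for all v with |v| ≤ ρ, then for any v_0 with |v_0| = ρ one has Q(v_0) = (h(v_0)+h(−v_0))/2 − h(0) ≤ 4δ², so sin∠(A⃗, A'⃗) ≤ 2δ/ρ. -/

import Mathlib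

open Metric RealInnerProductSpace

lemma infDist_submodule' {E : Type*} [NormedAddCommGroup E] [InnerProductSpace ℝ E]
    (K : Submodule ℝ E) [K.HasOrthogonalProjection] (x : E) :
    Metric.infDist x (K : Set E) = ‖x - (K.orthogonalProjectionOnto x : E)‖ := by
  rw [Metric.infDist_eq_iInf, ← Submodule.starProjection_apply, Submodule.starProjection_minimal]
  exact iInf_congr fun y => dist_eq_norm _ _

/-- `sin` of the (maximal principal) angle between two subspaces `V, W` of a Hilbert space. -/
noncomputable def sinAngle {E : Type*} [NormedAddCommGroup E] [InnerProductSpace ℝ E]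
    (V W : Submodule ℝ E) : ℝ :=
  sSup ((fun v => Metric.infDist v (W : Set E)) '' {v : E | v ∈ V ∧ ‖v‖ = 1})

/-- **Squared distance to an affine subspace is a quadratic polynomial, and the angle
estimate.** -/
theorem stmt9 {E : Type*} [NormedAddCommGroup E] [InnerProductSpace ℝ E] [CompleteSpace E]
    (n : ℕ) (V : Submodule ℝ E) (A' : AffineSubspace ℝ E)
    (hne : (A' : Set E).Nonempty) (hclosed : IsClosed (A' : Set E))
    (hV : Module.finrank ℝ V = n) (hW : Module.finrank ℝ A'.direction = n)
    (z : E) (h : E → ℝ) (hdef : ∀ v : E, h v = (Metric.infDist (z + v) (A' : Set E)) ^ 2)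
    (δ ρ : ℝ) (hρ : 0 < ρ) (hδ : 0 ≤ δ) :
    (∃ L : E →ₗ[ℝ] ℝ, ∀ v ∈ V,
      h v = (Metric.infDist (‖v‖⁻¹ • v) (A'.direction : Set E)) ^ 2 * ‖v‖ ^ 2
        + L v + h 0) ∧
    ((∀ v ∈ V, ‖v‖ ≤ ρ → h v ≤ 4 * δ ^ 2) → ∀ v₀ ∈ V, ‖v₀‖ = ρ →
      (h v₀ + h (-v₀)) / 2 - h 0 ≤ 4 * δ ^ 2 ∧
      sinAngle V A'.direction ≤ 2 * δ / ρ) := by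
  obtain ⟨a, ha⟩ := hne
  set W := A'.direction with hWdef
  haveI : CompleteSpace W := (A'.isClosed_direction_iff.mpr hclosed).completeSpace_coe
  -- g x = x - P_W x
  set g : E → E := fun x => x - (W.orthogonalProjectionOnto x : E) with hg
  have hg_dist : ∀ x : E, Metric.infDist x (W : Set E) = ‖g x‖ := fun x =>
    infDist_submodule' W x
  have hg_add : ∀ x y : E, g (x + y) = g x + g y := by
    intro x y; simp only [hg, map_add, Submodule.coe_add]; abel
  have hg_smul : ∀ (c : ℝ) (x : E), g (c • x) = c • g x := by
    intro c x; simp only [hg, map_smul, Submodule.coe_smul, smul_sub]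
  have hg_neg : ∀ x : E, g (-x) = -g x := by
    intro x
    have := hg_smul (-1) x
    simpa using this
  -- translate the affine subspace
  have hAset : (A' : Set E) = (fun w => w + a) '' (W : Set E) := by
    ext x
    constructor
    · intro hx
      refine ⟨x - a, ?_, by simp⟩
      have := (AffineSubspace.vsub_right_mem_direction_iff_mem ha x).mpr hx
      simpa [vsub_eq_sub] using this
    · rintro ⟨w, hw, rfl⟩
      have := (AffineSubspace.vsub_right_mem_direction_iff_mem ha (w + a)).mp
      have h2 : (w + a) -ᵥ a ∈ A'.direction := by simpa [vsub_eq_sub] using hw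
      exact (AffineSubspace.vsub_right_mem_direction_iff_mem ha (w + a)).mp h2
  have hdistA : ∀ x : E, Metric.infDist x (A' : Set E) = ‖g (x - a)‖ := by
    intro x
    have hiso : Isometry (fun w : E => w + a) := Isometry.of_dist_eq fun x y => by
      simp [dist_eq_norm]
    calc Metric.infDist x (A' : Set E)
        = Metric.infDist ((x - a) + a) ((fun w => w + a) '' (W : Set E)) := by
          rw [hAset]; norm_num
      _ = Metric.infDist (x - a) (W : Set E) := Metric.infDist_image hiso
      _ = ‖g (x - a)‖ := hg_dist _
  -- formula for h
  have hval : ∀ v : E, h v = ‖g v + g (z - a)‖ ^ 2 := by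
    intro v
    rw [hdef, hdistA]
    congr 2
    rw [← hg_add]
    congr 1
    abel
  have h0 : h 0 = ‖g (z - a)‖ ^ 2 := by
    rw [hval 0]
    have : g 0 = 0 := by simpa using hg_smul 0 0
    rw [this, zero_add]
  have hexp : ∀ v : E, h v = ‖g v‖ ^ 2 + 2 * (inner ℝ (g v) (g (z - a)) : ℝ) + h 0 := by
    intro v
    rw [hval, h0, norm_add_sq_real]
  -- the quadratic term
  have hQ : ∀ v : E,
      (Metric.infDist (‖v‖⁻¹ • v) (W : Set E)) ^ 2 * ‖v‖ ^ 2 = ‖g v‖ ^ 2 := by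
    intro v
    rcases eq_or_ne v 0 with rfl | hv
    · have : g 0 = 0 := by simpa using hg_smul 0 0
      simp [this]
    · have hnv : ‖v‖ ≠ 0 := norm_ne_zero_iff.mpr hv
      rw [hg_dist, hg_smul, norm_smul, Real.norm_eq_abs, abs_inv, abs_norm]
      field_simp
  constructor
  · -- part 1
    refine ⟨{ toFun := fun v => 2 * (inner ℝ (g v) (g (z - a)) : ℝ)
              map_add' := fun x y => by
                rw [hg_add, inner_add_left]; ring
              map_smul' := fun c x => by
                rw [hg_smul, real_inner_smul_left]; simp; ring }, ?_⟩
    intro v _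
    rw [hexp v, hQ v]
    rfl
  · -- part 2
    intro hbound v₀ hv₀V hv₀ρ
    have hLodd : ∀ v : E, h v + h (-v) = 2 * ‖g v‖ ^ 2 + 2 * h 0 := by
      intro v
      rw [hexp v, hexp (-v), hg_neg, norm_neg, inner_neg_left]
      ring
    have key : ∀ w ∈ V, ‖w‖ = ρ → ‖g w‖ ^ 2 ≤ 4 * δ ^ 2 := by
      intro w hwV hwρ
      have h1 : h w ≤ 4 * δ ^ 2 := hbound w hwV (le_of_eq hwρ)
      have h2 : h (-w) ≤ 4 * δ ^ 2 := hbound (-w) (neg_mem hwV) (by simp [hwρ])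
      have h3 : 0 ≤ h 0 := by rw [h0]; positivity
      nlinarith [hLodd w]
    constructor
    · have := hLodd v₀
      have hkey := key v₀ hv₀V hv₀ρ
      have h3 : 0 ≤ h 0 := by rw [h0]; positivity
      nlinarith
    · apply Real.sSup_le
      · rintro x ⟨u, ⟨huV, hu1⟩, rfl⟩
        have hρu : ‖ρ • u‖ = ρ := by
          rw [norm_smul, Real.norm_eq_abs, abs_of_pos hρ, hu1, mul_one]
        have hk := key (ρ • u) (Submodule.smul_mem V ρ huV) hρu
        rw [hg_smul, norm_smul, Real.norm_eq_abs, abs_of_pos hρ] at hk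
        have hgu : ‖g u‖ ≤ 2 * δ / ρ := by
          rw [le_div_iff₀ hρ]
          nlinarith [hk, norm_nonneg (g u), hδ, mul_nonneg hρ.le (norm_nonneg (g u))]
        show Metric.infDist u (W : Set E) ≤ 2 * δ / ρ
        rw [hg_dist]
        exact hgu
      · positivity
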